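/- Let l₁ and m₁ be two circles tangent at a point W, with m₁ inside l₁. Suppose a circle l₂ is orthogonal to both l₁ and m₁. Then l₂ passes through W. -/

import Mathlib

open Metric

set_option maxHeartbeats 1000000 in
/-- If `l₁` (center `O₁`, radius `r₁`) and `m₁` (center `O₂`, radius `r₂`) are
internally tangent at `W` (with `m₁` inside `l₁`), and a circle `l₂` (center `O₃`,
radius `r₃`) is orthogonal to both (`|O₃O₁|² = r₃² + r₁²` and `|O₃O₂|² = r₃² + r₂²`),
then `l₂` passes through `W`. -/
theorem stmt9 (O₁ O₂ O₃ W : EuclideanSpace ℝ (Fin 2)) (r₁ r₂ r₃ : ℝ)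
    (hr₂ : 0 < r₂) (hr₁ : r₂ < r₁) (hr₃ : 0 < r₃)
    (hW₁ : W ∈ sphere O₁ r₁) (hW₂ : W ∈ sphere O₂ r₂)
    (htan : dist O₁ O₂ = r₁ - r₂)
    (horth₁ : dist O₃ O₁ ^ 2 = r₃ ^ 2 + r₁ ^ 2)
    (horth₂ : dist O₃ O₂ ^ 2 = r₃ ^ 2 + r₂ ^ 2) :
    W ∈ sphere O₃ r₃ := by
  rw [mem_sphere] at hW₁ hW₂ ⊢
  -- O₂ is between O₁ and W
  have hbtw : Wbtw ℝ O₁ O₂ W := by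
    rw [← dist_add_dist_eq_iff]
    rw [htan, dist_comm O₂ W, hW₂, dist_comm O₁ W, hW₁]
    ring
  obtain ⟨b, hb, rfl⟩ := hbtw
  set w : EuclideanSpace ℝ (Fin 2) := W - O₁ with hw
  set a : EuclideanSpace ℝ (Fin 2) := O₃ - O₁ with ha
  have hwn : ‖w‖ = r₁ := by rw [hw, ← dist_eq_norm]; exact hW₁
  have hO₂ : AffineMap.lineMap O₁ W b = O₁ + b • w := by
    simp [AffineMap.lineMap_apply, hw]; abel
  have hbr : b * r₁ = r₁ - r₂ := by
    have := htan
    rw [hO₂] at this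
    rw [dist_eq_norm] at this
    have h1 : O₁ - (O₁ + b • w) = -(b • w) := by abel
    rw [h1, norm_neg, norm_smul, Real.norm_eq_abs, abs_of_nonneg hb.1, hwn] at this
    exact this
  have hbpos : 0 < b := by
    nlinarith
  have han : ‖a‖ ^ 2 = r₃ ^ 2 + r₁ ^ 2 := by
    rw [ha, ← dist_eq_norm]; exact horth₁
  have h2 : ‖a - b • w‖ ^ 2 = r₃ ^ 2 + r₂ ^ 2 := by
    rw [hO₂] at horth₂
    have h1 : O₃ - (O₁ + b • w) = a - b • w := by rw [ha]; abel
    rw [dist_eq_norm, h1] at horth₂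
    exact horth₂
  have key : inner ℝ a w = (r₁ : ℝ) ^ 2 := by
    have expand : ‖a - b • w‖ ^ 2 = ‖a‖ ^ 2 - 2 * (b * inner ℝ a w) + b ^ 2 * ‖w‖ ^ 2 := by
      rw [norm_sub_sq_real, real_inner_smul_right, norm_smul, Real.norm_eq_abs]
      rw [mul_pow, sq_abs]
    rw [expand, han, hwn] at h2
    have hb2 : b ^ 2 * r₁ ^ 2 = (r₁ - r₂) ^ 2 := by nlinarith
    have : 2 * (b * inner ℝ a w) = 2 * (b * r₁ ^ 2) := by nlinarith
    have := mul_left_cancel₀ (by positivity : (2*b:ℝ) ≠ 0)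
      (by linarith [this] : 2*b * inner ℝ a w = 2*b * r₁^2)
    exact this
  have final : ‖w - a‖ ^ 2 = r₃ ^ 2 := by
    rw [norm_sub_sq_real, real_inner_comm, key, hwn, han]; ring
  have : dist W O₃ ^ 2 = r₃ ^ 2 := by
    rw [dist_eq_norm]
    have h1 : W - O₃ = w - a := by rw [hw, ha]; abel
    rw [h1]; exact final
  nlinarith [dist_nonneg (x := W) (y := O₃), this]
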